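/- arXiv:1308.3036 — 4 statements merged into one kernel-verified Lean document; each statement's English description precedes it below -/
import Mathlib

section
/- Let S = M[G; I, Λ; P] be a central completely simple semigroup with P normalized, N a normal subgroup of G containing all entries of P, H = G/N, and U = M[N; I, Λ; P]. Then the map ν : S → U^H ⋊ H = U ≀ H given by (i,g,λ) ↦ (f_g^{iλ}, gN), where f_g^{iλ} : H → U sends A to (i, A f_g, λ) (with f_g from the Kaloujnine–Krasner embedding), is an injective semigroup homomorphism. Hence every central completely simple extension of U by H embeds in the wreath product U ≀ H. -/
/-- Rees matrix semigroup multiplication on `I × G × Λ` with sandwich matrix `P`. -/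
def reesMul {G I L : Type*} [Mul G] (P : L → I → G) (x y : I × G × L) : I × G × L :=
  (x.1, x.2.1 * P x.2.2 y.1 * y.2.1, y.2.2)

/-- The wreath-product action of `A ∈ H` on a function `f : H → α`: `B(A·f) = (BA)f`. -/
def wAct {H α : Type*} [Mul H] (A : H) (f : H → α) : H → α :=
  fun B => f (B * A)

/-- The Kaloujnine–Krasner map `f_g : H → G`, `A ↦ r_A g r_{A·gN}⁻¹`. -/
def kkMap {G : Type*} [Group G] (N : Subgroup G) [N.Normal]
    (r : G ⧸ N → G) (g : G) : G ⧸ N → G :=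
  fun A => r A * g * (r (A * (g : G ⧸ N)))⁻¹

/-- Every central completely simple semigroup `S = M[G;I,Λ;P]` (all entries of the
normalized sandwich matrix `P` lie in the centre of `G` and in the normal subgroup `N`)
which is an extension of `U = M[N;I,Λ;P]` by `H = G/N` embeds in the wreath product
`U ≀ H = U^H ⋊ H`:  the map `ν : (i,g,λ) ↦ (f_g^{iλ}, gN)` with
`f_g^{iλ}(A) = (i, A f_g, λ)` is injective, takes values in `U^H × H`
(middle coordinates in `N`), and is a semigroup homomorphism. -/
theorem stmt_15 {G I L : Type*} [Group G] (P : L → I → G) (i0 : I) (l0 : L)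
    (hnorm : (∀ i : I, P l0 i = 1) ∧ (∀ l : L, P l i0 = 1))
    (N : Subgroup G) [N.Normal]
    (hPN : ∀ (l : L) (i : I), P l i ∈ N)
    (hcentral : ∀ (l : L) (i : I), P l i ∈ Subgroup.center G)
    (r : G ⧸ N → G) (hr : ∀ A : G ⧸ N, (r A : G ⧸ N) = A) (hr1 : r 1 = 1) :
    letI nu : I × G × L → (G ⧸ N → I × G × L) × (G ⧸ N) :=
      fun x => (fun A => (x.1, kkMap N r x.2.1 A, x.2.2), (x.2.1 : G ⧸ N))
    (∀ (x : I × G × L) (A : G ⧸ N), ((nu x).1 A).2.1 ∈ N) ∧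
    Function.Injective nu ∧
    (∀ x y : I × G × L,
      nu (reesMul P x y) =
        ((fun C => reesMul P ((nu x).1 C) ((nu y).1 (C * (nu x).2))),
          (nu x).2 * (nu y).2)) := by
  dsimp only
  refine ⟨?_, ?_, ?_⟩
  · rintro ⟨i, g, l⟩ A
    show r A * g * (r (A * (g : G ⧸ N)))⁻¹ ∈ N
    rw [← QuotientGroup.eq_one_iff]
    simp [hr]
  · rintro ⟨i, g, l⟩ ⟨j, h, m⟩ heq
    have h2 : ((g : G ⧸ N)) = (h : G ⧸ N) := congrArg Prod.snd heq
    have h1 := congrArg (fun p => p.1 1) heq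
    simp only [Prod.mk.injEq, kkMap, hr1, one_mul] at h1
    obtain ⟨hi, hg, hl⟩ := h1
    have hgh : g = h := by
      rw [h2] at hg
      exact mul_right_cancel hg
    simp_all
  · rintro ⟨i, g, l⟩ ⟨j, h, m⟩
    have hq : ((g * P l j * h : G) : G ⧸ N) = (g : G ⧸ N) * (h : G ⧸ N) := by
      have h1 : ((P l j : G) : G ⧸ N) = 1 := (QuotientGroup.eq_one_iff _).2 (hPN l j)
      rw [QuotientGroup.mk_mul, QuotientGroup.mk_mul, h1, mul_one]
    simp only [reesMul]
    refine Prod.ext ?_ hq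
    funext C
    refine Prod.ext rfl (Prod.ext ?_ rfl)
    show kkMap N r (g * P l j * h) C = kkMap N r g C * P l j * kkMap N r h (C * (g : G ⧸ N))
    have hc : ∀ a : G, P l j * a = a * P l j := fun a =>
      ((Subgroup.mem_center_iff.1 (hcentral l j)) a).symm
    simp only [kkMap, hq]
    rw [show C * ((g : G ⧸ N) * (h : G ⧸ N)) = C * (g : G ⧸ N) * (h : G ⧸ N) from
      (mul_assoc _ _ _).symm]
    group
    rw [mul_assoc (r C * g), ← hc, ← mul_assoc]
    group
    rw [hc (r C), mul_assoc (r C) (P l j) g, hc g, ← mul_assoc (r C) g]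
end

section
/- Suppose φ : S → M[N^H; I^H, Λ^H; P^H] ⋊ H is an injective semigroup homomorphism from a Rees matrix semigroup S = M[G; I, Λ; P] (with P normalized, entries of P in the normal subgroup N of G, H = G/N) such that the H-component of (i,g,λ)φ is gN. If p_{λi} is the identity of G, then the map ι_{iλ} : G → N^H ⋊ H, g ↦ (p^H_{ξ_λ η_i} f_g^{iλ}, gN), is an injective group homomorphism, where (i,g,λ)φ = ((η_i, f_g^{iλ}, gN·ξ_λ), gN) with η_i ∈ I^H depending only on i and ξ_λ ∈ Λ^H depending only on λ. -/
/-- The sandwich matrix `P^H` over `G^H`: `A p^H_{ξη} = p_{Aξ,Aη}`. -/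
def sandwichPow {G I L H : Type*} (P : L → I → G) (xi : H → L) (eta : H → I) : H → G :=
  fun A => P (xi A) (eta A)

/-- Multiplication of the semidirect product `M[G^H; I^H, Λ^H; P^H] ⋊ H`
(the Rees-matrix form of the wreath product `M[G;I,Λ;P] ≀ H`). -/
def wreesMul {G I L H : Type*} [Group G] [Group H] (P : L → I → G)
    (X Y : ((H → I) × (H → G) × (H → L)) × H) :
    ((H → I) × (H → G) × (H → L)) × H :=
  ((X.1.1,
    X.1.2.1 * sandwichPow P X.1.2.2 (wAct X.2 Y.1.1) * wAct X.2 Y.1.2.1,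
    wAct X.2 Y.1.2.2), X.2 * Y.2)

/-- Multiplication of the wreath product group `G ≀ H = G^H ⋊ H`. -/
def gwrMul {G H : Type*} [Group G] [Group H] (x y : (H → G) × H) : (H → G) × H :=
  (x.1 * wAct x.2 y.1, x.2 * y.2)

/-- Suppose `φ : S = M[G;I,Λ;P] → M[N^H;I^H,Λ^H;P^H] ⋊ H` (with `P` normalized, its
entries in the normal subgroup `N`, `H = G/N`) is an injective semigroup homomorphism
of the form `(i,g,λ)φ = ((η_i, f_g^{iλ}, gN·ξ_λ), gN)` where `η_i` depends only on `i`
and `ξ_λ` only on `λ`, and the values `f_g^{iλ}` lie in `N^H`.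
If `p_{λi} = 1`, then `ι_{iλ} : g ↦ (p^H_{ξ_λ η_i} · f_g^{iλ}, gN)` is an injective
group homomorphism of `G` into the wreath product group `N^H ⋊ H`. -/
theorem stmt_16 {G I L : Type*} [Group G] (P : L → I → G) (i0 : I) (l0 : L)
    (hnorm : (∀ i : I, P l0 i = 1) ∧ (∀ l : L, P l i0 = 1))
    (N : Subgroup G) [N.Normal]
    (hPN : ∀ (l : L) (i : I), P l i ∈ N)
    (etaI : I → (G ⧸ N → I)) (xiL : L → (G ⧸ N → L))
    (F : I → L → G → (G ⧸ N → G))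
    (hFN : ∀ (i : I) (l : L) (g : G) (A : G ⧸ N), F i l g A ∈ N)
    (hinj : Function.Injective (fun x : I × G × L =>
      ((etaI x.1, F x.1 x.2.2 x.2.1, wAct ((x.2.1 : G ⧸ N)) (xiL x.2.2)),
        (x.2.1 : G ⧸ N))))
    (hhom : ∀ x y : I × G × L,
      ((etaI (reesMul P x y).1, F (reesMul P x y).1 (reesMul P x y).2.2 (reesMul P x y).2.1,
          wAct (((reesMul P x y).2.1 : G ⧸ N)) (xiL (reesMul P x y).2.2)),
        ((reesMul P x y).2.1 : G ⧸ N)) =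
      wreesMul P
        ((etaI x.1, F x.1 x.2.2 x.2.1, wAct ((x.2.1 : G ⧸ N)) (xiL x.2.2)), (x.2.1 : G ⧸ N))
        ((etaI y.1, F y.1 y.2.2 y.2.1, wAct ((y.2.1 : G ⧸ N)) (xiL y.2.2)), (y.2.1 : G ⧸ N)))
    (i : I) (l : L) (hP1 : P l i = 1) :
    Function.Injective (fun g : G =>
      ((sandwichPow P (xiL l) (etaI i) * F i l g, (g : G ⧸ N)) : (G ⧸ N → G) × (G ⧸ N))) ∧
    ∀ g h : G,
      ((sandwichPow P (xiL l) (etaI i) * F i l (g * h), ((g * h : G) : G ⧸ N)) :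
          (G ⧸ N → G) × (G ⧸ N)) =
        gwrMul (sandwichPow P (xiL l) (etaI i) * F i l g, (g : G ⧸ N))
          (sandwichPow P (xiL l) (etaI i) * F i l h, (h : G ⧸ N)) := by
  constructor
  · intro g h hgh
    have h2 : (g : G ⧸ N) = (h : G ⧸ N) := congrArg Prod.snd hgh
    have h1 : F i l g = F i l h :=
      mul_left_cancel (a := sandwichPow P (xiL l) (etaI i)) (congrArg Prod.fst hgh)
    have := hinj (a₁ := (i, g, l)) (a₂ := (i, h, l)) (by simp [h1, h2])
    exact congrArg (fun x : I × G × L => x.2.1) this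
  · intro g h
    have key := hhom (i, g, l) (i, h, l)
    simp only [reesMul, wreesMul, hP1, mul_one] at key
    have hF : F i l (g * h) =
        F i l g * sandwichPow P (wAct ((g : G ⧸ N)) (xiL l)) (wAct ((g : G ⧸ N)) (etaI i)) *
          wAct ((g : G ⧸ N)) (F i l h) := by
      have := congrArg (fun x => x.1.2.1) key
      simpa using this
    refine Prod.ext ?_ (by simp [gwrMul])
    show sandwichPow P (xiL l) (etaI i) * F i l (g * h) = _
    rw [hF]
    funext B
    simp [gwrMul, wAct, sandwichPow, Pi.mul_apply, mul_assoc]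
end

section
/- Let S = M[G; I, Λ; P] with P normalized, N a normal subgroup of G containing all entries of P, and H = G/N. Define V = M[N^H; I, H × Λ; Q] with q_{(B,λ),j} = B·f_{p_{λj}}, and let H act on V by A·(i, f, (B,λ)) = (i, A·f, (AB, λ)). Then this is a well-defined action of H on V by automorphisms, and the semidirect product V ⋊ H is defined. -/
/-- The sandwich matrix `Q` of `V = M[N^H; I, H × Λ; Q]`:
`q_{(B,λ),j} = B · f_{p_{λj}}`. -/
def sandwichQ {G I L : Type*} [Group G] (N : Subgroup G) [N.Normal]
    (r : G ⧸ N → G) (P : L → I → G) (Bl : (G ⧸ N) × L) (j : I) : G ⧸ N → G :=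
  wAct Bl.1 (kkMap N r (P Bl.2 j))

/-- Multiplication of `V = M[N^H; I, H × Λ; Q]`. -/
def vMul {G I L : Type*} [Group G] (N : Subgroup G) [N.Normal]
    (r : G ⧸ N → G) (P : L → I → G)
    (x y : I × (G ⧸ N → G) × ((G ⧸ N) × L)) : I × (G ⧸ N → G) × ((G ⧸ N) × L) :=
  (x.1, x.2.1 * sandwichQ N r P x.2.2 y.1 * y.2.1, y.2.2)

/-- The action of `A ∈ H` on `V`: `A·(i, f, (B,λ)) = (i, A·f, (AB, λ))`. -/
def vAct {G I L : Type*} [Group G] (N : Subgroup G) [N.Normal] (A : G ⧸ N)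
    (x : I × (G ⧸ N → G) × ((G ⧸ N) × L)) : I × (G ⧸ N → G) × ((G ⧸ N) × L) :=
  (x.1, wAct A x.2.1, (A * x.2.2.1, x.2.2.2))

/-- Let `S = M[G;I,Λ;P]` with `P` normalized, `N ⊴ G` containing all entries of `P`,
`H = G/N`, and `V = M[N^H; I, H × Λ; Q]` with `q_{(B,λ),j} = B·f_{p_{λj}}`.  Then the
entries of `Q` lie in `N^H`, and `A·(i,f,(B,λ)) = (i, A·f, (AB,λ))` is a well-defined
action of `H` on `V` by automorphisms (identity, composition, multiplicativity),
so the semidirect product `V ⋊ H` is defined. -/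
theorem stmt_18 {G I L : Type*} [Group G] (P : L → I → G) (i0 : I) (l0 : L)
    (hnorm : (∀ i : I, P l0 i = 1) ∧ (∀ l : L, P l i0 = 1))
    (N : Subgroup G) [N.Normal] (hPN : ∀ (l : L) (i : I), P l i ∈ N)
    (r : G ⧸ N → G) (hr : ∀ A : G ⧸ N, (r A : G ⧸ N) = A) (hr1 : r 1 = 1) :
    (∀ (Bl : (G ⧸ N) × L) (j : I) (A : G ⧸ N), sandwichQ N r P Bl j A ∈ N) ∧
    (∀ x : I × (G ⧸ N → G) × ((G ⧸ N) × L), vAct N 1 x = x) ∧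
    (∀ (A B : G ⧸ N) (x : I × (G ⧸ N → G) × ((G ⧸ N) × L)),
      vAct N (B * A) x = vAct N B (vAct N A x)) ∧
    (∀ (A : G ⧸ N) (x y : I × (G ⧸ N → G) × ((G ⧸ N) × L)),
      vAct N A (vMul N r P x y) = vMul N r P (vAct N A x) (vAct N A y)) := by
  refine ⟨?_, ?_, ?_, ?_⟩
  · intro Bl j A
    have hP : ((P Bl.2 j : G) : G ⧸ N) = 1 := (QuotientGroup.eq_one_iff _).2 (hPN _ _)
    simp only [sandwichQ, wAct, kkMap, hP, mul_one]
    have : r (A * Bl.1) * P Bl.2 j * (r (A * Bl.1))⁻¹ ∈ N :=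
      Subgroup.Normal.conj_mem ‹N.Normal› _ (hPN _ _) _
    exact this
  · intro x
    have h : wAct (1 : G ⧸ N) x.2.1 = x.2.1 := funext fun B => by simp [wAct]
    simp [vAct, h]
  · intro A B x
    simp [vAct, wAct, mul_assoc, funext_iff]
  · intro A x y
    simp only [vAct, vMul, Prod.mk.injEq, true_and, and_true]
    funext C
    simp only [wAct, Pi.mul_apply, sandwichQ, kkMap, mul_assoc]
end

section
/- Any completely simple semigroup S which is an extension of a completely simple semigroup U by a group H embeds into a semidirect product V ⋊ H, where V is a completely simple semigroup whose maximal subgroups are direct powers (indexed by H) of the maximal subgroups of U. Concretely, writing S = M[G; I, Λ; P] with P normalized, N ⊴ G containing all entries of P, H = G/N, U = M[N; I, Λ; P], and V = M[N^H; I, H × Λ; Q] with q_{(B,λ),j} = B·f_{p_{λj}} and action A·(i,f,(B,λ)) = (i, A·f, (AB,λ)), the map ψ : S → V ⋊ H, (i,g,λ) ↦ ((i, f_g, (gN, λ)), gN), is an injective semigroup homomorphism. -/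
/-- Multiplication of the semidirect product `V ⋊ H`: `(v,A)(w,B) = (v·(A·w), AB)`. -/
def vsdMul {G I L : Type*} [Group G] (N : Subgroup G) [N.Normal]
    (r : G ⧸ N → G) (P : L → I → G)
    (x y : (I × (G ⧸ N → G) × ((G ⧸ N) × L)) × (G ⧸ N)) :
    (I × (G ⧸ N → G) × ((G ⧸ N) × L)) × (G ⧸ N) :=
  (vMul N r P x.1 (vAct N x.2 y.1), x.2 * y.2)

/-- Any extension `S = M[G;I,Λ;P]` (with `P` normalized, `N ⊴ G` containing all entries
of `P`, `H = G/N`) of the completely simple semigroup `U = M[N;I,Λ;P]` by the group `H`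
embeds into the semidirect product `V ⋊ H`, where `V = M[N^H; I, H × Λ; Q]` is a
completely simple semigroup whose maximal subgroups are direct powers `N^H` of the
maximal subgroups `N` of `U`: concretely, the map
`ψ : (i,g,λ) ↦ ((i, f_g, (gN, λ)), gN)` is injective, takes its middle coordinate
values in `N`, and is a semigroup homomorphism. -/
theorem stmt_19 {G I L : Type*} [Group G] (P : L → I → G) (i0 : I) (l0 : L)
    (hnorm : (∀ i : I, P l0 i = 1) ∧ (∀ l : L, P l i0 = 1))
    (N : Subgroup G) [N.Normal] (hPN : ∀ (l : L) (i : I), P l i ∈ N)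
    (r : G ⧸ N → G) (hr : ∀ A : G ⧸ N, (r A : G ⧸ N) = A) (hr1 : r 1 = 1) :
    letI psi : I × G × L → (I × (G ⧸ N → G) × ((G ⧸ N) × L)) × (G ⧸ N) :=
      fun x => ((x.1, kkMap N r x.2.1, ((x.2.1 : G ⧸ N), x.2.2)), (x.2.1 : G ⧸ N))
    (∀ (x : I × G × L) (A : G ⧸ N), (psi x).1.2.1 A ∈ N) ∧
    Function.Injective psi ∧
    (∀ x y : I × G × L, psi (reesMul P x y) = vsdMul N r P (psi x) (psi y)) := by
  refine ⟨?_, ?_, ?_⟩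
  · rintro ⟨i, g, l⟩ A
    have h1 : ((r A * g * (r (A * (g : G ⧸ N)))⁻¹ : G) : G ⧸ N) = 1 := by
      rw [QuotientGroup.mk_mul, QuotientGroup.mk_mul, QuotientGroup.mk_inv, hr, hr]
      group
    exact (QuotientGroup.eq_one_iff _).1 h1
  · rintro ⟨i, g, l⟩ ⟨j, h, m⟩ heq
    simp only [Prod.mk.injEq] at heq
    obtain ⟨⟨hij, hf, hg, hl⟩, -⟩ := heq
    have h1 := congrFun hf 1
    simp only [kkMap, one_mul, hr1] at h1
    rw [hg] at h1
    have hgh : g = h := by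
      have := mul_right_cancel h1
      simpa using this
    simp [hij, hl, hgh]
  · rintro ⟨i, g, l⟩ ⟨j, h, m⟩
    have hp : ((P l j : G) : G ⧸ N) = 1 := (QuotientGroup.eq_one_iff _).2 (hPN l j)
    have hq : ((g * P l j * h : G) : G ⧸ N) = (g : G ⧸ N) * (h : G ⧸ N) := by
      rw [QuotientGroup.mk_mul, QuotientGroup.mk_mul, hp]
      group
    show (_, _) = (_, _)
    simp only [reesMul, vsdMul, vMul, vAct, sandwichQ, Prod.mk.injEq]
    refine ⟨⟨trivial, ?_, hq, trivial⟩, hq⟩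
    funext A
    simp only [kkMap, wAct, Pi.mul_apply]
    rw [hq, show A * ((g : G ⧸ N) * (h : G ⧸ N)) = A * g * h from (mul_assoc _ _ _).symm,
      show A * (g : G ⧸ N) * ((P l j : G) : G ⧸ N) = A * g by rw [hp, mul_one]]
    group
end
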